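/- Let K ⊆ ℂ be a bounded set whose upper Minkowski dimension is at most 2 − 4a for some a > 0, i.e. there exists c₁ < ∞ with L₂({z : dist(z, K) ≤ r}) ≤ c₁ r^{4a} for all r ∈ (0, 1). Fix a rectangle F = [x₁,x₂] × [y₁,y₂]. For t ∈ [y₁, y₂] and k ∈ ℕ, let n_t(k) be the number of dyadic subintervals of length 2^{−k} of the horizontal segment L_t ∩ F = {s + it : x₁ ≤ s ≤ x₂} that intersect K. Then ∫_{y₁}^{y₂} 2^{−k} n_t(k) dt ≤ c₁ 2^{−4ak}, and consequently for every c₂ > 0 the Lebesgue measure of {t ∈ [y₁,y₂] : n_t(k) > c₂ 2^{(1−4a)k}} is at most c₁/c₂. -/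

import Mathlib

open Complex Set Metric MeasureTheory
open scoped ENNReal

noncomputable section

/-- `nHit K x₁ x₂ t k` is the number of dyadic intervals of length `2^{−k}` of the
horizontal segment `{s + it : x₁ ≤ s ≤ x₂}` which intersect `K`. -/
def nHit (K : Set ℂ) (x₁ x₂ t : ℝ) (k : ℕ) : ℕ :=
  Set.ncard {m : ℤ | ∃ z ∈ K, z.im = t ∧ x₁ ≤ z.re ∧ z.re ≤ x₂ ∧
    (m : ℝ) * 2 ^ (-(k : ℝ)) ≤ z.re ∧ z.re ≤ ((m : ℝ) + 1) * 2 ^ (-(k : ℝ))}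

lemma aux_count (K : Set ℂ) (x₁ x₂ t : ℝ) (k : ℕ) :
    ENNReal.ofReal ((nHit K x₁ x₂ t k : ℝ) * 2 ^ (-(k : ℝ))) ≤
      volume {s : ℝ | Metric.infDist ((s : ℂ) + t * Complex.I) K ≤ 2 ^ (-(k : ℝ))} := by
  set r : ℝ := 2 ^ (-(k : ℝ)) with hrdef
  have hr : 0 < r := Real.rpow_pos_of_pos two_pos _
  set S : Set ℤ := {m : ℤ | ∃ z ∈ K, z.im = t ∧ x₁ ≤ z.re ∧ z.re ≤ x₂ ∧
    (m : ℝ) * r ≤ z.re ∧ z.re ≤ ((m : ℝ) + 1) * r} with hSdef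
  have hS : S.Finite := by
    apply (Set.finite_Icc ⌈x₁ / r - 1⌉ ⌊x₂ / r⌋).subset
    rintro m ⟨z, hzK, hzim, h1, h2, h3, h4⟩
    constructor
    · rw [Int.ceil_le]
      have : x₁ ≤ ((m : ℝ) + 1) * r := le_trans h1 h4
      rw [sub_le_iff_le_add, div_le_iff₀ hr]
      push_cast
      nlinarith
    · rw [Int.le_floor]
      have : (m : ℝ) * r ≤ x₂ := le_trans h3 h2
      rw [le_div_iff₀ hr]
      exact this
  have hn : nHit K x₁ x₂ t k = hS.toFinset.card := Set.ncard_eq_toFinset_card _ hS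
  -- the union of dyadic Ico's is contained in the neighborhood slice
  have hsub : (⋃ m ∈ hS.toFinset, Ico ((m : ℝ) * r) (((m : ℝ) + 1) * r)) ⊆
      {s : ℝ | Metric.infDist ((s : ℂ) + t * Complex.I) K ≤ r} := by
    intro s hs
    simp only [Finset.mem_coe, Set.mem_iUnion, Set.Finite.mem_toFinset] at hs
    obtain ⟨m, hm, hs1, hs2⟩ := hs
    obtain ⟨z, hzK, hzim, _, _, h3, h4⟩ := hm
    have hdist : dist ((s : ℂ) + t * Complex.I) z = |s - z.re| := by
      have hz : (s : ℂ) + t * Complex.I - z = ((s - z.re : ℝ) : ℂ) := by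
        apply Complex.ext <;> simp [hzim]
      rw [Complex.dist_eq, hz, Complex.norm_real, Real.norm_eq_abs]
    have : Metric.infDist ((s : ℂ) + t * Complex.I) K ≤ |s - z.re| :=
      hdist ▸ Metric.infDist_le_dist_of_mem hzK
    refine le_trans this ?_
    rw [abs_sub_le_iff]
    constructor <;> nlinarith [hs1, hs2.le, h3, h4]
  -- the volume of the union
  have hdisj : (↑hS.toFinset : Set ℤ).PairwiseDisjoint
      (fun m : ℤ => Ico ((m : ℝ) * r) (((m : ℝ) + 1) * r)) := by
    intro m _ m' _ hne
    rcases lt_or_gt_of_ne hne with h | h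
    · apply Set.Ico_disjoint_Ico.mpr
      have : ((m : ℝ) + 1) ≤ (m' : ℝ) := by exact_mod_cast h
      calc min (((m : ℝ) + 1) * r) (((m' : ℝ) + 1) * r) ≤ ((m : ℝ) + 1) * r :=
            min_le_left _ _
        _ ≤ (m' : ℝ) * r := by nlinarith
        _ ≤ max ((m : ℝ) * r) ((m' : ℝ) * r) := le_max_right _ _
    · apply Set.Ico_disjoint_Ico.mpr
      have : ((m' : ℝ) + 1) ≤ (m : ℝ) := by exact_mod_cast h
      calc min (((m : ℝ) + 1) * r) (((m' : ℝ) + 1) * r) ≤ ((m' : ℝ) + 1) * r :=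
            min_le_right _ _
        _ ≤ (m : ℝ) * r := by nlinarith
        _ ≤ max ((m : ℝ) * r) ((m' : ℝ) * r) := le_max_left _ _
  have hvol : volume (⋃ m ∈ hS.toFinset, Ico ((m : ℝ) * r) (((m : ℝ) + 1) * r)) =
      hS.toFinset.card * ENNReal.ofReal r := by
    rw [measure_biUnion_finset hdisj (fun m _ => measurableSet_Ico)]
    have : ∀ m : ℤ, volume (Ico ((m : ℝ) * r) (((m : ℝ) + 1) * r)) = ENNReal.ofReal r := by
      intro m
      rw [Real.volume_Ico]
      congr 1
      ring
    simp [this, Finset.sum_const]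
  calc ENNReal.ofReal ((nHit K x₁ x₂ t k : ℝ) * r)
      = (nHit K x₁ x₂ t k : ℝ≥0∞) * ENNReal.ofReal r := by
        rw [ENNReal.ofReal_mul (by positivity)]
        congr 1
        simp
    _ = hS.toFinset.card * ENNReal.ofReal r := by rw [hn]
    _ = volume (⋃ m ∈ hS.toFinset, Ico ((m : ℝ) * r) (((m : ℝ) + 1) * r)) := hvol.symm
    _ ≤ _ := measure_mono hsub


/-- Let `K ⊆ ℂ` be bounded with `L₂({z : dist(z,K) ≤ r}) ≤ c₁ r^{4a}` for all
`r ∈ (0,1)` (upper Minkowski dimension at most `2 − 4a`).  Fix a rectangle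
`F = [x₁,x₂] × [y₁,y₂]`, and for `t ∈ [y₁,y₂]` let `n_t(k)` be the number of dyadic
subintervals of length `2^{−k}` of the horizontal segment `L_t ∩ F` that intersect `K`.
Then `∫_{y₁}^{y₂} 2^{−k} n_t(k) dt ≤ c₁ 2^{−4ak}`, and consequently for every `c₂ > 0`
the Lebesgue measure of `{t ∈ [y₁,y₂] : n_t(k) > c₂ 2^{(1−4a)k}}` is at most
`c₁/c₂`. -/
theorem stmt17 (a : ℝ) (ha : 0 < a) (K : Set ℂ) (hK : Bornology.IsBounded K)
    (c₁ : ℝ) (hc₁ : ∀ r : ℝ, 0 < r → r < 1 →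
      volume {z : ℂ | Metric.infDist z K ≤ r} ≤ ENNReal.ofReal (c₁ * r ^ (4 * a)))
    (x₁ x₂ y₁ y₂ : ℝ) (hx : x₁ ≤ x₂) (hy : y₁ ≤ y₂)
    (k : ℕ) (hk : 1 ≤ k) :
    ((∫ t in y₁..y₂, 2 ^ (-(k : ℝ)) * (nHit K x₁ x₂ t k : ℝ)) ≤
        c₁ * 2 ^ (-(4 * a * (k : ℝ)))) ∧
    (∀ c₂ : ℝ, 0 < c₂ →
      volume {t ∈ Icc y₁ y₂ | c₂ * 2 ^ ((1 - 4 * a) * (k : ℝ)) < (nHit K x₁ x₂ t k : ℝ)} ≤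
        ENNReal.ofReal (c₁ / c₂)) := by
  set r : ℝ := 2 ^ (-(k : ℝ)) with hrdef
  have hr : 0 < r := Real.rpow_pos_of_pos two_pos _
  have hkpos : (0 : ℝ) < (k : ℝ) := by exact_mod_cast Nat.lt_of_lt_of_le Nat.zero_lt_one hk
  have hr1 : r < 1 := Real.rpow_lt_one_of_one_lt_of_neg one_lt_two (by linarith)
  -- K is nonempty
  have hKne : K.Nonempty := by
    rcases K.eq_empty_or_nonempty with h | h
    · exfalso
      have h2 := hc₁ (1/2) (by norm_num) (by norm_num)
      have h3 : {z : ℂ | Metric.infDist z K ≤ 1/2} = univ := by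
        ext z
        simp [h, Metric.infDist_empty]
      rw [h3] at h2
      have h4 : (volume : Measure ℂ) univ = ⊤ :=
        MeasureTheory.measure_univ_of_isAddLeftInvariant volume
      rw [h4] at h2
      exact ENNReal.ofReal_ne_top (top_le_iff.mp h2)
    · exact h
  -- the slice neighborhood sets
  set A : Set (ℝ × ℝ) :=
    {p : ℝ × ℝ | Metric.infDist ((p.1 : ℂ) + p.2 * Complex.I) K ≤ r} with hAdef
  have hAmeas : MeasurableSet A := by
    have hcont : Continuous fun p : ℝ × ℝ =>
        Metric.infDist ((p.1 : ℂ) + p.2 * Complex.I) K := by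
      apply (continuous_infDist_pt K).comp
      fun_prop
    exact (isClosed_le hcont continuous_const).measurableSet
  set φ : ℝ → ℝ≥0∞ := fun t => volume ((fun s : ℝ => (s, t)) ⁻¹' A) with hφdef
  have hφmeas : Measurable φ := measurable_measure_prodMk_right hAmeas
  have hφE : ∀ t : ℝ, (fun s : ℝ => (s, t)) ⁻¹' A =
      {s : ℝ | Metric.infDist ((s : ℂ) + t * Complex.I) K ≤ r} := fun t => rfl
  -- Fubini
  have hNvol : (∫⁻ t, φ t) = volume {z : ℂ | Metric.infDist z K ≤ r} := by
    have h1 : {z : ℂ | Metric.infDist z K ≤ r} = Complex.measurableEquivRealProd ⁻¹' A := by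
      ext z
      simp only [hAdef, Set.mem_setOf_eq, Set.mem_preimage,
        Complex.measurableEquivRealProd_apply]
      rw [Complex.re_add_im]
    rw [h1, Complex.volume_preserving_equiv_real_prod.measure_preimage
      hAmeas.nullMeasurableSet, Measure.volume_eq_prod, Measure.prod_apply_symm hAmeas]
  have hNle : (∫⁻ t, φ t) ≤ ENNReal.ofReal (c₁ * r ^ (4 * a)) := by
    rw [hNvol]; exact hc₁ r hr hr1
  -- c₁ is positive
  have hc₁pos : 0 < c₁ := by
    obtain ⟨z₀, hz₀⟩ := hKne
    have h1 : closedBall z₀ r ⊆ {z : ℂ | Metric.infDist z K ≤ r} := fun z hz =>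
      le_trans (Metric.infDist_le_dist_of_mem hz₀) (Metric.mem_closedBall.mp hz)
    have h2 : (0 : ℝ≥0∞) < volume {z : ℂ | Metric.infDist z K ≤ r} :=
      lt_of_lt_of_le (Metric.measure_closedBall_pos volume z₀ hr) (measure_mono h1)
    have h3 := lt_of_lt_of_le h2 (hc₁ r hr hr1)
    rw [ENNReal.ofReal_pos] at h3
    nlinarith [Real.rpow_pos_of_pos hr (4 * a)]
  -- slices have finite measure
  obtain ⟨R, hR⟩ := hK.subset_closedBall 0
  have hφtop : ∀ t, φ t ≠ ⊤ := by
    intro t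
    have hsub : (fun s : ℝ => (s, t)) ⁻¹' A ⊆ Icc (-(R + 2)) (R + 2) := by
      intro s hs
      rw [hφE t] at hs
      have hs' : Metric.infDist ((s : ℂ) + t * Complex.I) K < 2 := by
        simp only [Set.mem_setOf_eq] at hs; linarith
      obtain ⟨z, hzK, hzd⟩ := (Metric.infDist_lt_iff hKne).mp hs'
      have h5 : ‖z‖ ≤ R := by
        have := hR hzK
        simpa [Complex.dist_eq] using this
      have h6 : |s| ≤ R + 2 := by
        have h7 : |s| ≤ ‖(s : ℂ) + t * Complex.I‖ := by
          have : ((s : ℂ) + t * Complex.I).re = s := by simp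
          calc |s| = |((s : ℂ) + t * Complex.I).re| := by rw [this]
            _ ≤ ‖(s : ℂ) + t * Complex.I‖ := Complex.abs_re_le_norm _
        have h8 : ‖(s : ℂ) + t * Complex.I‖ ≤ dist ((s : ℂ) + t * Complex.I) z
            + ‖z‖ := by
          calc ‖(s : ℂ) + t * Complex.I‖
              = dist ((s : ℂ) + t * Complex.I) 0 := by simp [Complex.dist_eq]
            _ ≤ dist ((s : ℂ) + t * Complex.I) z + dist z 0 := dist_triangle _ _ _
            _ = dist ((s : ℂ) + t * Complex.I) z + ‖z‖ := by simp [Complex.dist_eq]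
        linarith
      rw [Set.mem_Icc]
      constructor <;> [linarith [neg_abs_le s]; linarith [le_abs_self s]]
    refine ne_top_of_le_ne_top ?_ (measure_mono hsub)
    rw [Real.volume_Icc]
    exact ENNReal.ofReal_ne_top
  -- key pointwise bound
  have key : ∀ t : ℝ, ENNReal.ofReal ((nHit K x₁ x₂ t k : ℝ) * r) ≤ φ t := by
    intro t
    simp only [hφdef, hφE]
    rw [hrdef]
    exact aux_count K x₁ x₂ t k
  -- the integrand bound
  have hfg : ∀ t : ℝ, r * (nHit K x₁ x₂ t k : ℝ) ≤ (φ t).toReal := by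
    intro t
    have h1 := (ENNReal.ofReal_le_iff_le_toReal (hφtop t)).mp (key t)
    linarith [h1, mul_comm r (nHit K x₁ x₂ t k : ℝ)]
  have hgmeas : Measurable fun t => (φ t).toReal := hφmeas.ennreal_toReal
  have hlint : ∀ s : Set ℝ, (∫⁻ t in s, ENNReal.ofReal ((φ t).toReal)) ≤
      ENNReal.ofReal (c₁ * r ^ (4 * a)) := by
    intro s
    calc (∫⁻ t in s, ENNReal.ofReal ((φ t).toReal))
        ≤ ∫⁻ t in s, φ t := lintegral_mono fun t => ENNReal.ofReal_toReal_le
      _ ≤ ∫⁻ t, φ t := setLIntegral_le_lintegral _ _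
      _ ≤ _ := hNle
  have hgint : IntegrableOn (fun t => (φ t).toReal) (Ioc y₁ y₂) := by
    refine ⟨hgmeas.aestronglyMeasurable, ?_⟩
    rw [hasFiniteIntegral_iff_ofReal (ae_of_all _ fun t => ENNReal.toReal_nonneg)]
    exact lt_of_le_of_lt (hlint _) ENNReal.ofReal_lt_top
  have hrw : c₁ * r ^ (4 * a) = c₁ * 2 ^ (-(4 * a * (k : ℝ))) := by
    rw [hrdef, ← Real.rpow_mul (by norm_num : (0:ℝ) ≤ 2)]
    congr 2
    ring
  constructor
  · -- Part 1
    rw [intervalIntegral.integral_of_le hy]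
    have h1 : (∫ t in Ioc y₁ y₂, r * (nHit K x₁ x₂ t k : ℝ)) ≤
        ∫ t in Ioc y₁ y₂, (φ t).toReal :=
      integral_mono_of_nonneg (ae_of_all _ fun t => by positivity) hgint
        (ae_of_all _ hfg)
    have h2 : (∫ t in Ioc y₁ y₂, (φ t).toReal) ≤ c₁ * r ^ (4 * a) := by
      rw [integral_eq_lintegral_of_nonneg_ae (ae_of_all _ fun t => ENNReal.toReal_nonneg)
        hgmeas.aestronglyMeasurable.restrict]
      calc (∫⁻ t in Ioc y₁ y₂, ENNReal.ofReal ((φ t).toReal)).toReal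
          ≤ (ENNReal.ofReal (c₁ * r ^ (4 * a))).toReal :=
            ENNReal.toReal_mono ENNReal.ofReal_ne_top (hlint _)
        _ = c₁ * r ^ (4 * a) := ENNReal.toReal_ofReal (by positivity)
    rw [← hrw]
    exact le_trans h1 h2
  · -- Part 2
    intro c₂ hc₂
    set p : ℝ := 2 ^ (-(4 * a * (k : ℝ))) with hpdef
    have hp : 0 < p := Real.rpow_pos_of_pos two_pos _
    have hrp : (2 : ℝ) ^ ((1 - 4 * a) * (k : ℝ)) * r = p := by
      rw [hrdef, hpdef, ← Real.rpow_add two_pos]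
      congr 1
      ring
    set ε : ℝ≥0∞ := ENNReal.ofReal (c₂ * p) with hεdef
    have hεne : ε ≠ 0 := (ENNReal.ofReal_pos.mpr (by positivity)).ne'
    have hBsub : {t ∈ Icc y₁ y₂ | c₂ * 2 ^ ((1 - 4 * a) * (k : ℝ)) < (nHit K x₁ x₂ t k : ℝ)}
        ⊆ {t | ε ≤ φ t} ∩ Icc y₁ y₂ := by
      rintro t ⟨ht1, ht2⟩
      refine ⟨?_, ht1⟩
      have h3 : c₂ * p ≤ (nHit K x₁ x₂ t k : ℝ) * r := by
        have h4 := mul_le_mul_of_nonneg_right ht2.le hr.le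
        calc c₂ * p = c₂ * 2 ^ ((1 - 4 * a) * (k : ℝ)) * r := by rw [mul_assoc, hrp]
          _ ≤ _ := h4
      exact le_trans (ENNReal.ofReal_le_ofReal h3) (key t)
    have hmarkov : ε * (volume.restrict (Icc y₁ y₂)) {t | ε ≤ φ t} ≤
        ENNReal.ofReal (c₁ * p) := by
      calc ε * (volume.restrict (Icc y₁ y₂)) {t | ε ≤ φ t}
          ≤ ∫⁻ t in Icc y₁ y₂, φ t :=
            mul_meas_ge_le_lintegral₀ hφmeas.aemeasurable ε
        _ ≤ ∫⁻ t, φ t := setLIntegral_le_lintegral _ _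
        _ ≤ ENNReal.ofReal (c₁ * r ^ (4 * a)) := hNle
        _ = ENNReal.ofReal (c₁ * p) := by rw [hrw]
    calc volume {t ∈ Icc y₁ y₂ | c₂ * 2 ^ ((1 - 4 * a) * (k : ℝ)) < (nHit K x₁ x₂ t k : ℝ)}
        ≤ volume ({t | ε ≤ φ t} ∩ Icc y₁ y₂) := measure_mono hBsub
      _ = (volume.restrict (Icc y₁ y₂)) {t | ε ≤ φ t} :=
          (Measure.restrict_apply (measurableSet_le measurable_const hφmeas)).symm
      _ ≤ ENNReal.ofReal (c₁ * p) / ε := by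
          rw [ENNReal.le_div_iff_mul_le (Or.inl hεne) (Or.inr ENNReal.ofReal_ne_top)]
          rw [mul_comm]
          exact hmarkov
      _ = ENNReal.ofReal (c₁ / c₂) := by
          rw [hεdef, ← ENNReal.ofReal_div_of_pos (by positivity)]
          congr 1
          rw [mul_div_mul_right _ _ hp.ne']

end
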